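/- arXiv:1903.06858 — 3 statements merged into one kernel-verified Lean document; each statement's English description precedes it below -/
import Mathlib

section
/- For the 2×2 complex matrices T = [[0,1],[0,0]] and A = [[1,1],[0,2]], T is numerical-radius orthogonal to A but T is not Birkhoff-James orthogonal to A in the operator norm. -/
open scoped InnerProductSpace

/-- Numerical radius of a bounded linear operator on a complex inner product space. -/
noncomputable def numRadius {E : Type*} [NormedAddCommGroup E] [InnerProductSpace ℂ E]
    (T : E →L[ℂ] E) : ℝ :=
  sSup {r : ℝ | ∃ x : E, ‖x‖ = 1 ∧ r = ‖⟪T x, x⟫_ℂ‖}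

/-- Numerical-radius orthogonality: `T ⊥_w A`. -/
def nrOrth {E : Type*} [NormedAddCommGroup E] [InnerProductSpace ℂ E]
    (T A : E →L[ℂ] E) : Prop :=
  ∀ l : ℂ, numRadius T ≤ numRadius (T + l • A)

open Complex

noncomputable def ev (a b : ℂ) : EuclideanSpace ℂ (Fin 2) :=
  (WithLp.equiv 2 (Fin 2 → ℂ)).symm ![a, b]

lemma ev_apply_zero (a b : ℂ) : ev a b 0 = a := rfl
lemma ev_apply_one (a b : ℂ) : ev a b 1 = b := rfl

lemma ev_norm (a b : ℂ) : ‖ev a b‖ = Real.sqrt (‖a‖ ^ 2 + ‖b‖ ^ 2) := by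
  simp [ev, EuclideanSpace.norm_eq, Fin.sum_univ_two]

lemma ev_eq_self (x : EuclideanSpace ℂ (Fin 2)) : ev (x 0) (x 1) = x := by
  refine PiLp.ext fun i => ?_
  fin_cases i <;> rfl

lemma clm_apply (M : Matrix (Fin 2) (Fin 2) ℂ) (a b : ℂ) (i : Fin 2) :
    (Matrix.toEuclideanCLM (𝕜 := ℂ) M) (ev a b) i = M i 0 * a + M i 1 * b := by
  simp [ev, Matrix.toEuclideanCLM_toLp, Matrix.toLin'_apply, Matrix.mulVec,
    dotProduct, Fin.sum_univ_two]
  fin_cases i <;> rfl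

lemma inner_two (u v : EuclideanSpace ℂ (Fin 2)) :
    ⟪u, v⟫_ℂ = (starRingEnd ℂ) (u 0) * v 0 + (starRingEnd ℂ) (u 1) * v 1 := by
  simp [PiLp.inner_apply, Fin.sum_univ_two, RCLike.inner_apply]
  ring

lemma T_apply_zero (a b : ℂ) : (Matrix.toEuclideanCLM (𝕜 := ℂ) !![0,1;0,0]) (ev a b) 0 = b := by
  rw [clm_apply]; norm_num
lemma T_apply_one (a b : ℂ) : (Matrix.toEuclideanCLM (𝕜 := ℂ) !![0,1;0,0]) (ev a b) 1 = 0 := by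
  rw [clm_apply]; norm_num
lemma A_apply_zero (a b : ℂ) : (Matrix.toEuclideanCLM (𝕜 := ℂ) !![1,1;0,2]) (ev a b) 0 = a + b := by
  rw [clm_apply]; norm_num
lemma A_apply_one (a b : ℂ) : (Matrix.toEuclideanCLM (𝕜 := ℂ) !![1,1;0,2]) (ev a b) 1 = 2 * b := by
  rw [clm_apply]; norm_num

lemma inner_val (l a b : ℂ) :
    ⟪(Matrix.toEuclideanCLM (𝕜 := ℂ) !![0,1;0,0]
        + l • Matrix.toEuclideanCLM (𝕜 := ℂ) !![1,1;0,2]) (ev a b), ev a b⟫_ℂ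
      = (starRingEnd ℂ) (b + l * (a + b)) * a + (starRingEnd ℂ) (2 * l * b) * b := by
  rw [inner_two]
  simp only [ContinuousLinearMap.add_apply, ContinuousLinearMap.coe_smul', Pi.smul_apply,
    PiLp.add_apply, PiLp.smul_apply, T_apply_zero, T_apply_one, A_apply_zero, A_apply_one,
    ev_apply_zero, ev_apply_one, smul_eq_mul, map_mul, map_add, map_zero, map_ofNat]
  ring

lemma inner_val_T (a b : ℂ) :
    ⟪(Matrix.toEuclideanCLM (𝕜 := ℂ) !![0,1;0,0]) (ev a b), ev a b⟫_ℂ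
      = (starRingEnd ℂ) b * a := by
  rw [inner_two]
  simp only [T_apply_zero, T_apply_one, ev_apply_zero, ev_apply_one, map_zero]
  ring

lemma nr_bddAbove {E : Type*} [NormedAddCommGroup E] [InnerProductSpace ℂ E]
    (S : E →L[ℂ] E) : BddAbove {r : ℝ | ∃ x : E, ‖x‖ = 1 ∧ r = ‖⟪S x, x⟫_ℂ‖} := by
  refine ⟨‖S‖, ?_⟩
  rintro r ⟨x, hx, rfl⟩
  calc ‖⟪S x, x⟫_ℂ‖ ≤ ‖S x‖ * ‖x‖ := norm_inner_le_norm _ _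
    _ ≤ (‖S‖ * ‖x‖) * ‖x‖ := by gcongr; exact S.le_opNorm x
    _ = ‖S‖ := by rw [hx]; ring

lemma le_nr {E : Type*} [NormedAddCommGroup E] [InnerProductSpace ℂ E]
    (S : E →L[ℂ] E) (x : E) (hx : ‖x‖ = 1) : ‖⟪S x, x⟫_ℂ‖ ≤ numRadius S :=
  le_csSup (nr_bddAbove S) ⟨x, hx, rfl⟩

lemma nr_le {E : Type*} [NormedAddCommGroup E] [InnerProductSpace ℂ E]
    (S : E →L[ℂ] E) (c : ℝ) (hc : 0 ≤ c) (h : ∀ x : E, ‖x‖ = 1 → ‖⟪S x, x⟫_ℂ‖ ≤ c) :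
    numRadius S ≤ c :=
  Real.sSup_le (by rintro r ⟨x, hx, rfl⟩; exact h x hx) hc

lemma sqrt2_inv_sq : ((Real.sqrt 2)⁻¹ : ℝ) ^ 2 = 2⁻¹ := by
  rw [inv_pow, Real.sq_sqrt (by norm_num : (2:ℝ) ≥ 0)]

lemma norm_sqrt2_inv : ‖(((Real.sqrt 2)⁻¹ : ℝ) : ℂ)‖ = (Real.sqrt 2)⁻¹ := by
  have h : ((Real.sqrt 2)⁻¹ : ℝ) ≥ 0 := by positivity
  simp [Complex.norm_real, _root_.abs_of_nonneg h]

/-- numRadius of T is at most 1/2. -/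
lemma nrT_le : numRadius (Matrix.toEuclideanCLM (𝕜 := ℂ) !![0,1;0,0]) ≤ 1/2 := by
  refine nr_le _ _ (by norm_num) fun x hx => ?_
  rw [← ev_eq_self x, inner_val_T]
  have hsum : ‖x 0‖ ^ 2 + ‖x 1‖ ^ 2 = 1 := by
    have := ev_norm (x 0) (x 1)
    rw [ev_eq_self x, hx] at this
    have h0 : (0:ℝ) ≤ ‖x 0‖ ^ 2 + ‖x 1‖ ^ 2 := by positivity
    nlinarith [Real.sq_sqrt h0]
  rw [norm_mul, RCLike.norm_conj]
  nlinarith [norm_nonneg (x 0), norm_nonneg (x 1), sq_nonneg (‖x 0‖ - ‖x 1‖)]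

/-- numRadius of T is at least 1/2 (witness (1/√2, 1/√2)). -/
lemma nrT_ge : (1/2 : ℝ) ≤ numRadius (Matrix.toEuclideanCLM (𝕜 := ℂ) !![0,1;0,0]) := by
  set c : ℂ := (((Real.sqrt 2)⁻¹ : ℝ) : ℂ)
  have hnorm : ‖ev c c‖ = 1 := by
    rw [ev_norm, norm_sqrt2_inv, sqrt2_inv_sq]
    norm_num
  have := le_nr (Matrix.toEuclideanCLM (𝕜 := ℂ) !![0,1;0,0]) (ev c c) hnorm
  rw [inner_val_T] at this
  have hc : (starRingEnd ℂ) c * c = (((2:ℝ)⁻¹ : ℝ) : ℂ) := by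
    simp only [c, Complex.conj_ofReal]
    rw [← Complex.ofReal_mul, ← sq, sqrt2_inv_sq]
  rw [hc, Complex.norm_real, Real.norm_eq_abs, _root_.abs_of_nonneg (by norm_num : ((2:ℝ)⁻¹:ℝ) ≥ 0)] at this
  linarith

set_option maxHeartbeats 1000000 in
set_option synthInstance.maxHeartbeats 1000000 in
lemma nr_ge_half (l : ℂ) :
    (1/2 : ℝ) ≤ numRadius (Matrix.toEuclideanCLM (𝕜 := ℂ) !![0,1;0,0]
      + l • Matrix.toEuclideanCLM (𝕜 := ℂ) !![1,1;0,2]) := by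
  by_cases hl0 : l = 0
  · subst hl0
    have h0 : (0:ℂ) • Matrix.toEuclideanCLM (𝕜 := ℂ) !![1,1;0,2] = 0 := by
      ext x; simp
    rw [h0, add_zero]
    exact nrT_ge
  by_cases hl1 : 1 + l = 0
  · -- witness (0,1)
    have hnorm : ‖ev 0 1‖ = 1 := by rw [ev_norm]; norm_num
    have h := le_nr (Matrix.toEuclideanCLM (𝕜 := ℂ) !![0,1;0,0]
      + l • Matrix.toEuclideanCLM (𝕜 := ℂ) !![1,1;0,2]) (ev 0 1) hnorm
    rw [inner_val l 0 1] at h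
    have hval : (starRingEnd ℂ) ((1:ℂ) + l * (0 + 1)) * 0 + (starRingEnd ℂ) (2 * l * 1) * 1
        = (starRingEnd ℂ) (2 * l) := by ring_nf
    rw [hval] at h
    have : ‖(starRingEnd ℂ) (2 * l)‖ = 2 * ‖l‖ := by
      rw [RCLike.norm_conj, norm_mul]; norm_num
    rw [this] at h
    have hml : l = -1 := by linear_combination hl1
    have hnl : ‖l‖ = 1 := by rw [hml]; simp
    rw [hnl] at h
    linarith
  · set r : ℝ := ‖l‖ with hr
    set s : ℝ := ‖1 + l‖ with hs
    have hrpos : 0 < r := by simpa [hr] using norm_pos_iff.mpr hl0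
    have hspos : 0 < s := by simpa [hs] using norm_pos_iff.mpr hl1
    have hr0c : ((r : ℝ) : ℂ) ≠ 0 := by exact_mod_cast ne_of_gt hrpos
    have hs0c : ((s : ℝ) : ℂ) ≠ 0 := by exact_mod_cast ne_of_gt hspos
    set u : ℂ := l * (starRingEnd ℂ) (1 + l) * (((r * s : ℝ)) : ℂ)⁻¹ with hu
    have hnu : ‖u‖ = 1 := by
      rw [hu, norm_mul, norm_mul, RCLike.norm_conj, norm_inv, Complex.norm_real,
        Real.norm_eq_abs, _root_.abs_of_nonneg (by positivity : (0:ℝ) ≤ r * s)]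
      rw [← hr, ← hs]
      field_simp
    have huu : u * (starRingEnd ℂ) u = 1 := by
      have h1 := Complex.mul_conj' u
      rw [hnu] at h1
      simpa using h1
    have hc1 : (starRingEnd ℂ) (1 + l) * (1 + l) = (((s ^ 2 : ℝ)) : ℂ) := by
      have h1 := Complex.mul_conj' (1 + l)
      rw [← hs] at h1
      push_cast
      linear_combination h1
    have key2 : u * (1 + l) = l * (((s / r : ℝ)) : ℂ) := by
      have h2 : u * (1 + l) = l * (((s ^ 2 : ℝ)) : ℂ) * (((r * s : ℝ)) : ℂ)⁻¹ := by
        rw [hu]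
        linear_combination l * (((r * s : ℝ)) : ℂ)⁻¹ * hc1
      rw [h2]
      push_cast
      field_simp
    clear_value u
    set c : ℂ := (((Real.sqrt 2)⁻¹ : ℝ) : ℂ) with hcdef
    have hcc : c * c = (((2:ℝ)⁻¹ : ℝ) : ℂ) := by
      rw [hcdef, ← Complex.ofReal_mul, ← sq, sqrt2_inv_sq]
    have hconjc : (starRingEnd ℂ) c = c := by rw [hcdef]; exact Complex.conj_ofReal _
    have hnormc : ‖c‖ = (Real.sqrt 2)⁻¹ := by rw [hcdef]; exact norm_sqrt2_inv
    clear_value c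
    have hnorm : ‖ev ((starRingEnd ℂ) u * c) c‖ = 1 := by
      rw [ev_norm, norm_mul, RCLike.norm_conj, hnu, one_mul, hnormc, sqrt2_inv_sq]
      norm_num
    have h := le_nr (Matrix.toEuclideanCLM (𝕜 := ℂ) !![0,1;0,0]
      + l • Matrix.toEuclideanCLM (𝕜 := ℂ) !![1,1;0,2]) (ev ((starRingEnd ℂ) u * c) c) hnorm
    rw [inner_val l ((starRingEnd ℂ) u * c) c] at h
    have hval : (starRingEnd ℂ) (c + l * ((starRingEnd ℂ) u * c + c)) * ((starRingEnd ℂ) u * c)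
          + (starRingEnd ℂ) (2 * l * c) * c
        = (starRingEnd ℂ) (u * (1 + l) + 3 * l) * (c * c) := by
      simp only [map_add, map_mul, Complex.conj_conj, hconjc, map_one, map_ofNat]
      linear_combination (starRingEnd ℂ) l * c * c * huu
    rw [hval, hcc] at h
    have hval2 : u * (1 + l) + 3 * l = l * (((s / r + 3 : ℝ)) : ℂ) := by
      rw [key2]; push_cast; ring
    have hnormval : ‖(starRingEnd ℂ) (u * (1 + l) + 3 * l) * (((2:ℝ)⁻¹ : ℝ) : ℂ)‖
        = r * (s / r + 3) * 2⁻¹ := by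
      rw [norm_mul, RCLike.norm_conj, hval2, norm_mul, Complex.norm_real, Complex.norm_real,
        Real.norm_eq_abs, Real.norm_eq_abs, ← hr,
        _root_.abs_of_nonneg (by positivity : (0:ℝ) ≤ s / r + 3),
        _root_.abs_of_nonneg (by norm_num : (0:ℝ) ≤ (2:ℝ)⁻¹)]
    rw [hnormval] at h
    have hfr : r * (s / r + 3) = s + 3 * r := by field_simp
    rw [hfr] at h
    have htri : (1:ℝ) ≤ s + r := by
      have := norm_sub_le (1 + l) l
      simpa [hs, hr] using this
    calc (1/2 : ℝ) ≤ (s + 3 * r) * 2⁻¹ := by nlinarith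
      _ ≤ _ := h

lemma S_coord0 (l a b : ℂ) :
    (Matrix.toEuclideanCLM (𝕜 := ℂ) !![0,1;0,0]
      + l • Matrix.toEuclideanCLM (𝕜 := ℂ) !![1,1;0,2]) (ev a b) 0 = b + l * (a + b) := by
  simp only [ContinuousLinearMap.add_apply, ContinuousLinearMap.coe_smul', Pi.smul_apply,
    PiLp.add_apply, PiLp.smul_apply, T_apply_zero, A_apply_zero, smul_eq_mul]

lemma S_coord1 (l a b : ℂ) :
    (Matrix.toEuclideanCLM (𝕜 := ℂ) !![0,1;0,0]
      + l • Matrix.toEuclideanCLM (𝕜 := ℂ) !![1,1;0,2]) (ev a b) 1 = 2 * l * b := by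
  simp only [ContinuousLinearMap.add_apply, ContinuousLinearMap.coe_smul', Pi.smul_apply,
    PiLp.add_apply, PiLp.smul_apply, T_apply_one, A_apply_one, smul_eq_mul, zero_add]
  ring

lemma S_apply (l a b : ℂ) :
    (Matrix.toEuclideanCLM (𝕜 := ℂ) !![0,1;0,0]
      + l • Matrix.toEuclideanCLM (𝕜 := ℂ) !![1,1;0,2]) (ev a b)
      = ev (b + l * (a + b)) (2 * l * b) := by
  refine PiLp.ext fun i => ?_
  fin_cases i
  · rw [show ((⟨0, by norm_num⟩ : Fin 2)) = 0 from rfl, S_coord0]; rfl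
  · rw [show ((⟨1, by norm_num⟩ : Fin 2)) = 1 from rfl, S_coord1]; rfl

lemma normT_ge : 1 ≤ ‖Matrix.toEuclideanCLM (𝕜 := ℂ) !![0,1;0,0]‖ := by
  have h1 : (Matrix.toEuclideanCLM (𝕜 := ℂ) !![0,1;0,0]) (ev 0 1) = ev 1 0 := by
    refine PiLp.ext fun i => ?_
    fin_cases i
    · rw [show ((⟨0, by norm_num⟩ : Fin 2)) = 0 from rfl, T_apply_zero]; rfl
    · rw [show ((⟨1, by norm_num⟩ : Fin 2)) = 1 from rfl, T_apply_one]; rfl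
  have h2 := (Matrix.toEuclideanCLM (𝕜 := ℂ) !![0,1;0,0]).le_opNorm (ev 0 1)
  rw [h1, ev_norm, ev_norm] at h2
  norm_num at h2
  exact h2

lemma normS_le : ‖Matrix.toEuclideanCLM (𝕜 := ℂ) !![0,1;0,0]
    + (-(1/6) : ℂ) • Matrix.toEuclideanCLM (𝕜 := ℂ) !![1,1;0,2]‖ ≤ Real.sqrt (5/6) := by
  refine ContinuousLinearMap.opNorm_le_bound _ (Real.sqrt_nonneg _) fun x => ?_
  obtain ⟨a, b, rfl⟩ : ∃ a b, x = ev a b := ⟨x 0, x 1, (ev_eq_self x).symm⟩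
  rw [S_apply, ev_norm, ev_norm, ← Real.sqrt_mul (by norm_num : (0:ℝ) ≤ 5/6)]
  apply Real.sqrt_le_sqrt
  have e0 : ‖b + (-(1/6) : ℂ) * (a + b)‖ ≤ (1/6) * ‖a‖ + (5/6) * ‖b‖ := by
    have : b + (-(1/6) : ℂ) * (a + b) = (-(1/6) : ℂ) * a + (5/6 : ℂ) * b := by ring
    rw [this]
    refine (norm_add_le _ _).trans ?_
    rw [norm_mul, norm_mul]
    have n1 : ‖(-(1/6) : ℂ)‖ = 1/6 := by
      rw [norm_neg]
      rw [norm_div]; simp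
    have n2 : ‖(5/6 : ℂ)‖ = 5/6 := by rw [norm_div]; simp
    rw [n1, n2]
  have e1 : ‖2 * (-(1/6) : ℂ) * b‖ = (1/3) * ‖b‖ := by
    rw [norm_mul, norm_mul]
    have : ‖(2:ℂ)‖ = 2 := by simp
    have n1 : ‖(-(1/6) : ℂ)‖ = 1/6 := by
      rw [norm_neg]; rw [norm_div]; simp
    rw [this, n1]; ring
  rw [e1]
  nlinarith [e0, norm_nonneg a, norm_nonneg b, norm_nonneg (b + (-(1/6) : ℂ) * (a + b)),
    sq_nonneg (5 * ‖a‖ - ‖b‖)]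

theorem stmt4 :
    let T : Matrix (Fin 2) (Fin 2) ℂ := !![0, 1; 0, 0]
    let A : Matrix (Fin 2) (Fin 2) ℂ := !![1, 1; 0, 2]
    nrOrth (Matrix.toEuclideanCLM (𝕜 := ℂ) T) (Matrix.toEuclideanCLM (𝕜 := ℂ) A) ∧
      ¬ (∀ l : ℂ, ‖(Matrix.toEuclideanCLM (𝕜 := ℂ) T : EuclideanSpace ℂ (Fin 2) →L[ℂ] EuclideanSpace ℂ (Fin 2))‖ ≤
          ‖(Matrix.toEuclideanCLM (𝕜 := ℂ) T : EuclideanSpace ℂ (Fin 2) →L[ℂ] EuclideanSpace ℂ (Fin 2)) +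
            l • Matrix.toEuclideanCLM (𝕜 := ℂ) A‖) := by
  intro T A
  constructor
  · intro l
    exact le_trans nrT_le (nr_ge_half l)
  · intro hcon
    have h := hcon (-(1/6))
    have hlt : Real.sqrt (5/6) < 1 := by
      rw [show (1:ℝ) = Real.sqrt 1 by simp]
      exact Real.sqrt_lt_sqrt (by norm_num) (by norm_num)
    have := le_trans normT_ge (le_trans h normS_le)
    linarith
end

section
/- Let H be a complex Hilbert space and T, A bounded linear operators on H. Suppose that for each θ ∈ [0,2π) there exists a sequence {xₙ} of unit vectors such that |⟨Txₙ,xₙ⟩| → w(T) and lim inf Re{e^{-iθ}⟨Txₙ,xₙ⟩·conj(⟨Axₙ,xₙ⟩)} ≥ 0. Then T is numerical-radius orthogonal to A, i.e., w(T+λA) ≥ w(T) for all λ ∈ ℂ. -/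
open scoped InnerProductSpace

open Filter Topology ComplexConjugate Real

private lemma numRadius_bdd {E : Type*} [NormedAddCommGroup E] [InnerProductSpace ℂ E]
    (T : E →L[ℂ] E) : BddAbove {r : ℝ | ∃ x : E, ‖x‖ = 1 ∧ r = ‖⟪T x, x⟫_ℂ‖} := by
  refine ⟨‖T‖, ?_⟩
  rintro r ⟨x, hx, rfl⟩
  calc ‖⟪T x, x⟫_ℂ‖ ≤ ‖T x‖ * ‖x‖ := norm_inner_le_norm _ _
    _ ≤ (‖T‖ * ‖x‖) * ‖x‖ := by
        gcongr
        exact T.le_opNorm x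
    _ = ‖T‖ := by rw [hx]; ring

private lemma le_numRadius {E : Type*} [NormedAddCommGroup E] [InnerProductSpace ℂ E]
    (T : E →L[ℂ] E) {x : E} (hx : ‖x‖ = 1) : ‖⟪T x, x⟫_ℂ‖ ≤ numRadius T :=
  le_csSup (numRadius_bdd T) ⟨x, hx, rfl⟩

theorem stmt5 {H : Type*} [NormedAddCommGroup H] [InnerProductSpace ℂ H] [CompleteSpace H]
    (T A : H →L[ℂ] H)
    (h : ∀ θ ∈ Set.Ico (0 : ℝ) (2 * π), ∃ x : ℕ → H, (∀ n, ‖x n‖ = 1) ∧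
      Tendsto (fun n => ‖⟪T (x n), x n⟫_ℂ‖) atTop (𝓝 (numRadius T)) ∧
      0 ≤ atTop.liminf
        (fun n => (Complex.exp (-(θ : ℂ) * Complex.I) * ⟪T (x n), x n⟫_ℂ *
          conj ⟪A (x n), x n⟫_ℂ).re)) :
    nrOrth T A := by
  intro l
  set r : ℝ := ‖l‖ with hr_def
  have hr : 0 ≤ r := norm_nonneg l
  set θ : ℝ := if l.arg ≤ 0 then -l.arg else 2 * π - l.arg with hθ_def
  have harg1 := Complex.neg_pi_lt_arg l
  have harg2 := Complex.arg_le_pi l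
  have hπ := Real.pi_pos
  have hθmem : θ ∈ Set.Ico (0 : ℝ) (2 * π) := by
    constructor
    · by_cases h0 : l.arg ≤ 0 <;> simp only [hθ_def, if_pos, if_neg, h0, if_true, if_false] <;>
        nlinarith
    · by_cases h0 : l.arg ≤ 0 <;> simp only [hθ_def, if_pos, if_neg, h0, if_true, if_false] <;>
        nlinarith
  have hl : (r : ℂ) * Complex.exp (-(θ : ℂ) * Complex.I) = l := by
    have base := Complex.norm_mul_exp_arg_mul_I l
    have hexp : Complex.exp (-(θ : ℂ) * Complex.I) = Complex.exp (l.arg * Complex.I) := by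
      by_cases h0 : l.arg ≤ 0
      · simp only [hθ_def, if_pos h0]
        push_cast
        ring_nf
      · simp only [hθ_def, if_neg h0]
        push_cast
        rw [show -(2 * (π : ℂ) - (l.arg : ℂ)) * Complex.I
            = (l.arg : ℂ) * Complex.I + -(2 * π * Complex.I) by ring, Complex.exp_add,
          Complex.exp_neg, Complex.exp_two_pi_mul_I]
        simp
    rw [hexp]
    exact base
  obtain ⟨x, hx1, hx2, hx3⟩ := h θ hθmem
  -- notation
  set t : ℕ → ℂ := fun n => ⟪T (x n), x n⟫_ℂ with ht_def
  set a : ℕ → ℂ := fun n => ⟪A (x n), x n⟫_ℂ with ha_def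
  set f : ℕ → ℝ := fun n => (Complex.exp (-(θ : ℂ) * Complex.I) * t n * conj (a n)).re with hf_def
  set wT := numRadius T with hwT
  set W := numRadius (T + l • A) with hW
  have hWnn : 0 ≤ W := le_trans (norm_nonneg _) (le_numRadius (T + l • A) (hx1 0))
  have hwTnn : 0 ≤ wT := le_trans (norm_nonneg _) (le_numRadius T (hx1 0))
  rcases eq_or_lt_of_le hwTnn with hwT0 | hwTpos
  · rw [← hwT0]; exact hWnn
  -- bound on f
  have hexpabs : ‖Complex.exp (-(θ : ℂ) * Complex.I)‖ = 1 := by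
    rw [show -(θ : ℂ) * Complex.I = ((-θ : ℝ) : ℂ) * Complex.I by push_cast; ring]
    exact Complex.norm_exp_ofReal_mul_I _
  have hfb : ∀ n, -(‖T‖ * ‖A‖) ≤ f n := by
    intro n
    have h1 : -(‖Complex.exp (-(θ : ℂ) * Complex.I) * t n * conj (a n)‖) ≤ f n := by
      have := Complex.abs_re_le_norm (Complex.exp (-(θ : ℂ) * Complex.I) * t n * conj (a n))
      have := neg_abs_le ((Complex.exp (-(θ : ℂ) * Complex.I) * t n * conj (a n)).re)
      simp only [hf_def]
      linarith
    have h2 : ‖Complex.exp (-(θ : ℂ) * Complex.I) * t n * conj (a n)‖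
        = ‖t n‖ * ‖a n‖ := by
      rw [norm_mul, norm_mul, hexpabs, Complex.norm_conj]; ring
    have h3 : ‖t n‖ ≤ ‖T‖ := by
      calc ‖t n‖ = ‖⟪T (x n), x n⟫_ℂ‖ := rfl
        _ ≤ ‖T (x n)‖ * ‖x n‖ := norm_inner_le_norm _ _
        _ ≤ (‖T‖ * ‖x n‖) * ‖x n‖ := by gcongr; exact T.le_opNorm _
        _ = ‖T‖ := by rw [hx1 n]; ring
    have h4 : ‖a n‖ ≤ ‖A‖ := by
      calc ‖a n‖ = ‖⟪A (x n), x n⟫_ℂ‖ := rfl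
        _ ≤ ‖A (x n)‖ * ‖x n‖ := norm_inner_le_norm _ _
        _ ≤ (‖A‖ * ‖x n‖) * ‖x n‖ := by gcongr; exact A.le_opNorm _
        _ = ‖A‖ := by rw [hx1 n]; ring
    have h5 : ‖t n‖ * ‖a n‖ ≤ ‖T‖ * ‖A‖ :=
      mul_le_mul h3 h4 (norm_nonneg _) (norm_nonneg _)
    rw [h2] at h1
    linarith
  -- main inequality on squares
  have key : wT ^ 2 ≤ W ^ 2 := by
    apply le_of_forall_pos_le_add
    intro ε hε
    set δ : ℝ := min (wT / 2) (ε / (2 * wT + 2 * r + 1)) with hδ_def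
    have hδpos : 0 < δ := by
      apply lt_min (by linarith)
      apply div_pos hε (by nlinarith)
    have hδwT : δ ≤ wT / 2 := min_le_left _ _
    have hδε : δ * (2 * wT + 2 * r + 1) ≤ ε := by
      rw [hδ_def]
      have := min_le_right (wT / 2) (ε / (2 * wT + 2 * r + 1))
      calc min (wT / 2) (ε / (2 * wT + 2 * r + 1)) * (2 * wT + 2 * r + 1)
          ≤ (ε / (2 * wT + 2 * r + 1)) * (2 * wT + 2 * r + 1) := by
            apply mul_le_mul_of_nonneg_right this (by nlinarith)
        _ = ε := by field_simp
    -- eventually ‖t n‖ > wT - δ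
    have hev1 : ∀ᶠ n in atTop, wT - δ < ‖t n‖ :=
      hx2.eventually (eventually_gt_nhds (by linarith))
    -- eventually f n > -δ
    have hev2 : ∀ᶠ n in atTop, -δ < f n := by
      exact eventually_lt_of_lt_liminf (lt_of_lt_of_le (by linarith) hx3)
        (isBoundedUnder_of ⟨-(‖T‖ * ‖A‖), fun n => hfb n⟩)
    obtain ⟨n, hn1, hn2⟩ := (hev1.and hev2).exists
    -- compute the inner product of T + l•A
    have hinner : ⟪(T + l • A) (x n), x n⟫_ℂ = t n + conj l * a n := by
      simp [ContinuousLinearMap.add_apply, ContinuousLinearMap.smul_apply, inner_add_left,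
        inner_smul_left, ht_def, ha_def]
      ring
    have hWn : ‖t n + conj l * a n‖ ≤ W := by
      rw [← hinner]; exact le_numRadius _ (hx1 n)
    -- expand the square
    have hre : (t n * conj (conj l * a n)).re = r * f n := by
      have : t n * conj (conj l * a n) = (r : ℂ) * (Complex.exp (-(θ : ℂ) * Complex.I) * t n
          * conj (a n)) := by
        rw [map_mul, Complex.conj_conj, ← hl]; ring
      rw [this]
      rw [Complex.re_ofReal_mul]
    have hsq : ‖t n + conj l * a n‖ ^ 2
        = Complex.normSq (t n) + Complex.normSq (conj l * a n) + 2 * (r * f n) := by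
      rw [Complex.sq_norm, Complex.normSq_add, hre]
    have h5 : (wT - δ) ^ 2 ≤ Complex.normSq (t n) := by
      rw [← Complex.sq_norm]
      have : wT - δ ≤ ‖t n‖ := le_of_lt hn1
      have hnn : (0 : ℝ) ≤ wT - δ := by linarith
      exact pow_le_pow_left₀ hnn this 2
    have h6 : ‖t n + conj l * a n‖ ^ 2 ≤ W ^ 2 :=
      pow_le_pow_left₀ (norm_nonneg _) hWn 2
    have h7 : (wT - δ) ^ 2 + 2 * (r * (-δ)) ≤ W ^ 2 := by
      have hδf : -δ ≤ f n := le_of_lt hn2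
      have := Complex.normSq_nonneg (conj l * a n)
      nlinarith
    nlinarith
  nlinarith [key, hwTnn, hWnn]
end

section
/- Let H be a complex Hilbert space and A = (A_{jk}) an n×n operator matrix with all entries in B(H), acting on H^n. Then w(A) ≥ max{w(A_{kk}), w(A_{ij}+A_{ji})/2, w(A_{ij}−A_{ji})/2 : 1 ≤ i,j,k ≤ n}. -/
open scoped InnerProductSpace

section helpers

variable {E : Type*} [NormedAddCommGroup E] [InnerProductSpace ℂ E]

lemma numRadius_nonneg (T : E →L[ℂ] E) : 0 ≤ numRadius T :=
  Real.sSup_nonneg (by rintro r ⟨x, hx, rfl⟩; positivity)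

lemma numRadius_bddAbove (T : E →L[ℂ] E) :
    BddAbove {r : ℝ | ∃ x : E, ‖x‖ = 1 ∧ r = ‖⟪T x, x⟫_ℂ‖} := by
  refine ⟨‖T‖, ?_⟩
  rintro r ⟨x, hx, rfl⟩
  calc ‖⟪T x, x⟫_ℂ‖ ≤ ‖T x‖ * ‖x‖ := norm_inner_le_norm _ _
    _ ≤ ‖T‖ * ‖x‖ * ‖x‖ := by
        gcongr
        exact T.le_opNorm x
    _ = ‖T‖ := by rw [hx]; ring

lemma numRadius_ge (T : E →L[ℂ] E) {x : E} (hx : ‖x‖ = 1) :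
    ‖⟪T x, x⟫_ℂ‖ ≤ numRadius T :=
  le_csSup (numRadius_bddAbove T) ⟨x, hx, rfl⟩

lemma numRadius_ge' (T : E →L[ℂ] E) (z : E) :
    ‖⟪T z, z⟫_ℂ‖ ≤ numRadius T * ‖z‖ ^ 2 := by
  rcases eq_or_ne z 0 with rfl | hz
  · simp
  · have hz' : ‖z‖ ≠ 0 := norm_ne_zero_iff.2 hz
    have h1 : ‖((‖z‖ : ℂ))⁻¹ • z‖ = 1 := by
      rw [norm_smul, norm_inv, Complex.norm_real, Real.norm_eq_abs,
        abs_of_nonneg (norm_nonneg z)]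
      field_simp
    have h2 := numRadius_ge T h1
    rw [map_smul, inner_smul_left, inner_smul_right, norm_mul, norm_mul,
      RCLike.norm_conj, norm_inv, Complex.norm_real, Real.norm_eq_abs,
      abs_of_nonneg (norm_nonneg z)] at h2
    have hzpos : (0:ℝ) < ‖z‖ := lt_of_le_of_ne (norm_nonneg z) (Ne.symm hz')
    have h3 : ‖z‖⁻¹ * ‖z‖ = 1 := inv_mul_cancel₀ hz'
    have heq : ‖⟪T z, z⟫_ℂ‖ = (‖z‖⁻¹ * (‖z‖⁻¹ * ‖⟪T z, z⟫_ℂ‖)) * ‖z‖ ^ 2 :=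
      calc ‖⟪T z, z⟫_ℂ‖ = ‖⟪T z, z⟫_ℂ‖ * (‖z‖⁻¹ * ‖z‖) * (‖z‖⁻¹ * ‖z‖) := by
            rw [h3]; ring
        _ = (‖z‖⁻¹ * (‖z‖⁻¹ * ‖⟪T z, z⟫_ℂ‖)) * ‖z‖ ^ 2 := by ring
    rw [heq]
    have hsq : (0:ℝ) ≤ ‖z‖ ^ 2 := sq_nonneg _
    exact mul_le_mul_of_nonneg_right h2 hsq

end helpers

section key

variable {n : ℕ} {H : Type*} [NormedAddCommGroup H] [InnerProductSpace ℂ H]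
    [CompleteSpace H]

/-- Diagonal entries: for unit `x`, `‖⟪A k k x, x⟫‖ ≤ numRadius S`. -/
lemma diag_bound (A : Fin n → Fin n → (H →L[ℂ] H))
    (S : PiLp 2 (fun _ : Fin n => H) →L[ℂ] PiLp 2 (fun _ : Fin n => H))
    (hS : ∀ z : PiLp 2 (fun _ : Fin n => H), ∀ j,
      (WithLp.equiv 2 (Fin n → H)) (S z) j =
        ∑ k, A j k ((WithLp.equiv 2 (Fin n → H)) z k))
    (k : Fin n) {x : H} (hx : ‖x‖ = 1) :
    ‖⟪A k k x, x⟫_ℂ‖ ≤ numRadius S := by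
  set z : PiLp 2 (fun _ : Fin n => H) :=
    (WithLp.equiv 2 (Fin n → H)).symm (Pi.single k x) with hzdef
  have hzcomp : ∀ l, (WithLp.equiv 2 (Fin n → H)) z l = Pi.single (M := fun _ : Fin n => H) k x l := by
    intro l; rw [hzdef, Equiv.apply_symm_apply]
  have hznorm : ‖z‖ = 1 := by
    rw [hzdef]; exact (PiLp.norm_toLp_single (p := 2) (β := fun _ : Fin n => H) k x).trans hx
  have hinner : ⟪S z, z⟫_ℂ = ⟪A k k x, x⟫_ℂ := by
    rw [PiLp.inner_apply]
    have hcomp : ∀ l, (S z) l = ∑ m, A l m (Pi.single (M := fun _ : Fin n => H) k x m) := by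
      intro l
      have := hS z l
      simp only [hzcomp] at this; exact this
    rw [Finset.sum_eq_single_of_mem k (Finset.mem_univ k)]
    · rw [hcomp k, Finset.sum_eq_single_of_mem k (Finset.mem_univ k)]
      · have : z k = x := by
          have := hzcomp k
          simpa using this
        rw [this, Pi.single_eq_same]
      · intro m _ hm
        rw [Pi.single_eq_of_ne hm, map_zero]
    · intro l _ hl
      have : z l = 0 := by
        have := hzcomp l
        simpa [Pi.single_eq_of_ne hl] using this
      rw [this, inner_zero_right]
  have := numRadius_ge S hznorm
  rwa [hinner] at this

/-- Off-diagonal key bound. -/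
lemma offdiag_bound (A : Fin n → Fin n → (H →L[ℂ] H))
    (S : PiLp 2 (fun _ : Fin n => H) →L[ℂ] PiLp 2 (fun _ : Fin n => H))
    (hS : ∀ z : PiLp 2 (fun _ : Fin n => H), ∀ j,
      (WithLp.equiv 2 (Fin n → H)) (S z) j =
        ∑ k, A j k ((WithLp.equiv 2 (Fin n → H)) z k))
    {i j : Fin n} (hij : i ≠ j) {x : H} (hx : ‖x‖ = 1)
    (θ : ℂ) (hθ : ‖θ‖ = 1) :
    ‖(starRingEnd ℂ) θ * ⟪A i j x, x⟫_ℂ + θ * ⟪A j i x, x⟫_ℂ‖ ≤ 2 * numRadius S := by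
  set a := ⟪A i i x, x⟫_ℂ
  set b := ⟪A i j x, x⟫_ℂ
  set c := ⟪A j i x, x⟫_ℂ
  set d := ⟪A j j x, x⟫_ℂ
  have hθθ : θ * (starRingEnd ℂ) θ = 1 := by
    rw [mul_comm, Complex.conj_mul', ← Complex.ofReal_pow, hθ]
    norm_num
  have hxx : ⟪x, x⟫_ℂ = 1 := by
    rw [inner_self_eq_norm_sq_to_K, hx]; norm_num
  -- the main computation, for any unimodular μ
  have main : ∀ μ : ℂ, ‖μ‖ = 1 →
      ‖a + (starRingEnd ℂ) μ * b + μ * c + d‖ ≤ 2 * numRadius S := by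
    intro μ hμ
    have hμμ : μ * (starRingEnd ℂ) μ = 1 := by
      rw [mul_comm, Complex.conj_mul', ← Complex.ofReal_pow, hμ]
      norm_num
    set z : PiLp 2 (fun _ : Fin n => H) :=
      (WithLp.equiv 2 (Fin n → H)).symm (Pi.single i x) +
        μ • (WithLp.equiv 2 (Fin n → H)).symm (Pi.single j x) with hzdef
    have hzcomp : ∀ l, (WithLp.equiv 2 (Fin n → H)) z l
        = Pi.single (M := fun _ : Fin n => H) i x l + μ • Pi.single (M := fun _ : Fin n => H) j x l := by
      intro l
      rw [hzdef]
      simp [Pi.single_apply, Equiv.apply_symm_apply]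
    have hzi : (WithLp.equiv 2 (Fin n → H)) z i = x := by
      rw [hzcomp i, Pi.single_eq_same, Pi.single_eq_of_ne hij]
      simp
    have hzj : (WithLp.equiv 2 (Fin n → H)) z j = μ • x := by
      rw [hzcomp j, Pi.single_eq_same, Pi.single_eq_of_ne (Ne.symm hij)]
      simp
    have hzo : ∀ l, l ≠ i → l ≠ j → (WithLp.equiv 2 (Fin n → H)) z l = 0 := by
      intro l hli hlj
      rw [hzcomp l, Pi.single_eq_of_ne hli, Pi.single_eq_of_ne hlj]
      simp
    -- components of S z
    have hScomp : ∀ l, (WithLp.equiv 2 (Fin n → H)) (S z) l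
        = A l i x + μ • A l j x := by
      intro l
      rw [hS z l]
      rw [Finset.sum_eq_add_of_mem i j (Finset.mem_univ i) (Finset.mem_univ j) hij]
      · rw [hzi, hzj, map_smul]
      · intro m _ hm
        rw [hzo m hm.1 hm.2, map_zero]
    -- inner product ⟪S z, z⟫
    have hinner : ⟪S z, z⟫_ℂ = a + (starRingEnd ℂ) μ * b + μ * c + d := by
      rw [PiLp.inner_apply]
      rw [Finset.sum_eq_add_of_mem i j (Finset.mem_univ i) (Finset.mem_univ j) hij]
      · have h1 : ⟪(S z : PiLp 2 (fun _ : Fin n => H)) i,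
            (z : PiLp 2 (fun _ : Fin n => H)) i⟫_ℂ = a + (starRingEnd ℂ) μ * b := by
          have e1 : (S z) i = A i i x + μ • A i j x := hScomp i
          have e2 : z i = x := hzi
          rw [e1, e2, inner_add_left, inner_smul_left]
        have h2 : ⟪(S z : PiLp 2 (fun _ : Fin n => H)) j,
            (z : PiLp 2 (fun _ : Fin n => H)) j⟫_ℂ = μ * c + d := by
          have e1 : (S z) j = A j i x + μ • A j j x := hScomp j
          have e2 : z j = μ • x := hzj
          rw [e1, e2, inner_add_left, inner_smul_left, inner_smul_right,
            inner_smul_right, ← mul_assoc, mul_comm ((starRingEnd ℂ) μ) μ, hμμ, one_mul]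
        rw [h1, h2]; ring
      · intro m _ hm
        have : (z : PiLp 2 (fun _ : Fin n => H)) m = 0 := hzo m hm.1 hm.2
        rw [this, inner_zero_right]
    -- norm of z
    have hznorm : ‖z‖ ^ 2 = 2 := by
      have hzz : ⟪z, z⟫_ℂ = 2 := by
        rw [PiLp.inner_apply]
        rw [Finset.sum_eq_add_of_mem i j (Finset.mem_univ i) (Finset.mem_univ j) hij]
        · have e1 : (z : PiLp 2 (fun _ : Fin n => H)) i = x := hzi
          have e2 : (z : PiLp 2 (fun _ : Fin n => H)) j = μ • x := hzj
          rw [e1, e2, inner_smul_left, inner_smul_right, hxx]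
          rw [mul_one, mul_comm ((starRingEnd ℂ) μ) μ, hμμ]
          norm_num
        · intro m _ hm
          have : (z : PiLp 2 (fun _ : Fin n => H)) m = 0 := hzo m hm.1 hm.2
          rw [this, inner_zero_right]
      have := @inner_self_eq_norm_sq ℂ _ _ _ _ z
      rw [hzz] at this
      simpa using this.symm
    have hb := numRadius_ge' S z
    rw [hinner, hznorm] at hb
    calc ‖a + (starRingEnd ℂ) μ * b + μ * c + d‖ ≤ numRadius S * 2 := hb
      _ = 2 * numRadius S := by ring
  have h1 := main θ hθ
  have h2 := main (-θ) (by rw [norm_neg, hθ])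
  have hdiff : (a + (starRingEnd ℂ) θ * b + θ * c + d)
      - (a + (starRingEnd ℂ) (-θ) * b + (-θ) * c + d)
      = 2 * ((starRingEnd ℂ) θ * b + θ * c) := by
    rw [map_neg]; ring
  calc ‖(starRingEnd ℂ) θ * b + θ * c‖
      = ‖(a + (starRingEnd ℂ) θ * b + θ * c + d)
          - (a + (starRingEnd ℂ) (-θ) * b + (-θ) * c + d)‖ / 2 := by
        rw [hdiff, norm_mul]
        have h2 : ‖(2:ℂ)‖ = 2 := by norm_num
        rw [h2]
        ring
    _ ≤ (‖a + (starRingEnd ℂ) θ * b + θ * c + d‖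
          + ‖a + (starRingEnd ℂ) (-θ) * b + (-θ) * c + d‖) / 2 := by
        gcongr
        exact norm_sub_le _ _
    _ ≤ (2 * numRadius S + 2 * numRadius S) / 2 := by gcongr
    _ = 2 * numRadius S := by ring

end key

theorem stmt18 {n : ℕ} {H : Type*} [NormedAddCommGroup H] [InnerProductSpace ℂ H]
    [CompleteSpace H]
    (A : Fin n → Fin n → (H →L[ℂ] H))
    (S : PiLp 2 (fun _ : Fin n => H) →L[ℂ] PiLp 2 (fun _ : Fin n => H))
    (hS : ∀ z : PiLp 2 (fun _ : Fin n => H), ∀ j,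
      (WithLp.equiv 2 (Fin n → H)) (S z) j =
        ∑ k, A j k ((WithLp.equiv 2 (Fin n → H)) z k)) :
    (∀ k, numRadius (A k k) ≤ numRadius S) ∧
      (∀ i j, numRadius (A i j + A j i) / 2 ≤ numRadius S) ∧
      (∀ i j, numRadius (A i j - A j i) / 2 ≤ numRadius S) := by
  have hSnn : 0 ≤ numRadius S := numRadius_nonneg S
  have hdiag : ∀ k, numRadius (A k k) ≤ numRadius S := by
    intro k
    apply Real.sSup_le _ hSnn
    rintro r ⟨x, hx, rfl⟩
    exact diag_bound A S hS k hx
  refine ⟨hdiag, ?_, ?_⟩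
  · intro i j
    rw [div_le_iff₀ (by norm_num : (0:ℝ) < 2)]
    apply Real.sSup_le _ (by positivity)
    rintro r ⟨x, hx, rfl⟩
    rcases eq_or_ne i j with rfl | hij
    · have : ⟪(A i i + A i i) x, x⟫_ℂ = 2 * ⟪A i i x, x⟫_ℂ := by
        rw [ContinuousLinearMap.add_apply, inner_add_left]; ring
      rw [this, norm_mul]
      have hb := diag_bound A S hS i hx
      calc ‖(2:ℂ)‖ * ‖⟪A i i x, x⟫_ℂ‖ = 2 * ‖⟪A i i x, x⟫_ℂ‖ := by norm_num
        _ ≤ 2 * numRadius S := by linarith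
        _ = numRadius S * 2 := by ring
    · have key := offdiag_bound A S hS hij hx 1 (by norm_num)
      have : ⟪(A i j + A j i) x, x⟫_ℂ
          = (starRingEnd ℂ) 1 * ⟪A i j x, x⟫_ℂ + 1 * ⟪A j i x, x⟫_ℂ := by
        rw [ContinuousLinearMap.add_apply, inner_add_left, map_one]; ring
      rw [this]
      calc ‖(starRingEnd ℂ) 1 * ⟪A i j x, x⟫_ℂ + 1 * ⟪A j i x, x⟫_ℂ‖
          ≤ 2 * numRadius S := key
        _ = numRadius S * 2 := by ring
  · intro i j
    rw [div_le_iff₀ (by norm_num : (0:ℝ) < 2)]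
    apply Real.sSup_le _ (by positivity)
    rintro r ⟨x, hx, rfl⟩
    rcases eq_or_ne i j with rfl | hij
    · have h0 : ⟪(A i i - A i i) x, x⟫_ℂ = 0 := by simp
      rw [h0, norm_zero]
      positivity
    · have key := offdiag_bound A S hS hij hx Complex.I (by simp)
      have heq : ⟪(A i j - A j i) x, x⟫_ℂ
          = Complex.I
              * ((starRingEnd ℂ) Complex.I * ⟪A i j x, x⟫_ℂ
                + Complex.I * ⟪A j i x, x⟫_ℂ) := by
        rw [ContinuousLinearMap.sub_apply, inner_sub_left, Complex.conj_I]
        have hI : Complex.I * Complex.I = -1 := Complex.I_mul_I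
        ring_nf
        rw [Complex.I_sq]
        ring
      rw [heq, norm_mul]
      have hnI : ‖Complex.I‖ = 1 := by simp
      rw [hnI, one_mul]
      calc ‖(starRingEnd ℂ) Complex.I * ⟪A i j x, x⟫_ℂ
            + Complex.I * ⟪A j i x, x⟫_ℂ‖ ≤ 2 * numRadius S := key
        _ = numRadius S * 2 := by ring
end
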